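/- Let M be a complex vector space with a linear map Y_M(·,x) satisfying the truncation condition and the twisted Jacobi identity. Then for all u, v ∈ V and w ∈ M there exist k(u,v) ∈ ℕ and l(u,w) ∈ (1/p)ℕ such that for every integer k ≥ k(u,v) and every l ∈ (1/p)ℤ with l ≥ l(u,w): (weak commutativity) (x_1−x_2)^{k} Y_M(u,x_1)Y_M(v,x_2) = (x_1−x_2)^{k} Y_M(v,x_2)Y_M(u,x_1), and (twisted weak associativity) P_{[[x_0,x_0^{-1}]]} ( (x_0+x_2)^{l} Y_M(u,x_0+x_2)Y_M(v,x_2)w ) = (x_2+x_0)^{l} (1/p) ∑_{r=0}^{p−1} ω_p^{−lrp} Y_M(Y(ν^r u, x_0)v, x_2)w. -/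

import Mathlib

noncomputable section

open scoped BigOperators

/-- Generalized binomial coefficient `z(z-1)⋯(z-k+1)/k!`. -/
def cbinom (z : ℂ) (k : ℕ) : ℂ :=
  (∏ j ∈ Finset.range k, (z - (j : ℂ))) / (k.factorial : ℂ)

/-- Generalized binomial coefficient with integer lower index (zero for negative index). -/
def cbinomZ (z : ℂ) (k : ℤ) : ℂ := if 0 ≤ k then cbinom z k.toNat else 0

/-- A vertex operator algebra `(V, Y, 𝟙, ω)` over `ℂ`, described in terms of the modes
`vₙ = Y v n` of the vertex operators `Y(v,x) = ∑ₙ vₙ x^{-n-1}`.  The Jacobi identity is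
expressed in its equivalent component (Borcherds identity) form: it is the equality of the
coefficients of `x₀^{-n-1} x₁^{-a-1} x₂^{-b-1}` on the two sides of the formal-variable
Jacobi identity, with all binomials expanded by the binomial expansion convention. -/
structure VOA (V : Type) [AddCommGroup V] [Module ℂ V] where
  Y : V →ₗ[ℂ] ℤ → Module.End ℂ V
  vac : V
  conf : V
  cc : ℂ
  grade : ℤ → Submodule ℂ V
  internal : DirectSum.IsInternal grade
  findim : ∀ n : ℤ, FiniteDimensional ℂ (grade n)
  bddBelow : ∃ N : ℤ, ∀ n < N, grade n = ⊥
  trunc : ∀ u v : V, ∃ N : ℤ, ∀ n ≥ N, Y u n v = 0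
  vacuum : ∀ n : ℤ, Y vac n = if n = -1 then 1 else 0
  creation_zero : ∀ (v : V) (n : ℤ), 0 ≤ n → Y v n vac = 0
  creation_id : ∀ v : V, Y v (-1) vac = v
  virasoro : ∀ m n : ℤ,
    Y conf (m + 1) * Y conf (n + 1) - Y conf (n + 1) * Y conf (m + 1)
      = ((m - n : ℤ) : ℂ) • Y conf (m + n + 1)
        + (if m + n = 0 then ((m ^ 3 - m : ℤ) : ℂ) / 12 * cc else 0) •
            (1 : Module.End ℂ V)
  L0_grade : ∀ n : ℤ, ∀ v ∈ grade n, Y conf 1 v = (n : ℂ) • v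
  L_neg_one : ∀ (u : V) (n : ℤ), Y (Y conf 0 u) n = (-n : ℂ) • Y u (n - 1)
  jacobi : ∀ (u v w : V) (a n b : ℤ),
    (∑ᶠ i : ℕ, cbinom (a : ℂ) i • Y (Y u (n + i) v) (a + b - i) w)
      = (∑ᶠ i : ℕ, ((-1 : ℂ) ^ i * cbinom (n : ℂ) i) • Y u (a + n - i) (Y v (b + i) w))
        - (-1 : ℂ) ^ n •
            (∑ᶠ i : ℕ, ((-1 : ℂ) ^ i * cbinom (n : ℂ) i) • Y v (b + n - i) (Y u (a + i) w))

variable {V W : Type} [AddCommGroup V] [Module ℂ V] [AddCommGroup W] [Module ℂ W]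

/-- Truncation condition for a module-type vertex operator map. -/
def TruncW (YW : V →ₗ[ℂ] ℤ → Module.End ℂ W) : Prop :=
  ∀ (v : V) (w : W), ∃ N : ℤ, ∀ n ≥ N, YW v n w = 0

/-- The Jacobi identity for a module map `Y_W`, in component form. -/
def JacobiW (𝒜 : VOA V) (YW : V →ₗ[ℂ] ℤ → Module.End ℂ W) : Prop :=
  ∀ (u v : V) (w : W) (a n b : ℤ),
    (∑ᶠ i : ℕ, cbinom (a : ℂ) i • YW (𝒜.Y u (n + i) v) (a + b - i) w)
      = (∑ᶠ i : ℕ, ((-1 : ℂ) ^ i * cbinom (n : ℂ) i) • YW u (a + n - i) (YW v (b + i) w))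
        - (-1 : ℂ) ^ n •
            (∑ᶠ i : ℕ, ((-1 : ℂ) ^ i * cbinom (n : ℂ) i) • YW v (b + n - i) (YW u (a + i) w))

section Twisted

variable {V M : Type} [AddCommGroup V] [Module ℂ V] [AddCommGroup M] [Module ℂ M]

/-- Truncation condition for a twisted-module-type vertex operator map.  Here, for a fixed
period `p`, the map `Y_M` is encoded by its modes in `(1/p)ℤ`, rescaled by `p`:
`YM v N` is the mode `v^ν_{N/p}`, the coefficient of `x^{-N/p-1}` in `Y_M(v,x)`. -/
def TwTrunc (YM : V →ₗ[ℂ] ℤ → Module.End ℂ M) : Prop :=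
  ∀ (v : V) (w : M), ∃ N : ℤ, ∀ n ≥ N, YM v n w = 0

/-- The twisted Jacobi identity in component form: the equality of the coefficients of
`x₀^{-n-1} x₁^{-a/p-1} x₂^{-b/p-1}` on the two sides of the twisted Jacobi identity,
with all binomials expanded by the binomial expansion convention. -/
def TwJacobi (p : ℕ) (𝒜 : VOA V) (ν : V ≃ₗ[ℂ] V) (ωp : ℂ)
    (YM : V →ₗ[ℂ] ℤ → Module.End ℂ M) : Prop :=
  ∀ (u v : V) (w : M) (n a b : ℤ),
    (∑ᶠ i : ℕ, ((-1 : ℂ) ^ i * cbinom (n : ℂ) i) •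
        YM u (a + (p : ℤ) * (n - i)) (YM v (b + (p : ℤ) * i) w))
      - (-1 : ℂ) ^ n •
          (∑ᶠ i : ℕ, ((-1 : ℂ) ^ i * cbinom (n : ℂ) i) •
            YM v (b + (p : ℤ) * (n - i)) (YM u (a + (p : ℤ) * i) w))
      = (p : ℂ)⁻¹ • ∑ r ∈ Finset.range p, ωp ^ (-(r : ℤ) * a) •
          (∑ᶠ i : ℕ, cbinom ((a : ℂ) / (p : ℂ)) i •
            YM (𝒜.Y ((ν ^ r) u) (n + i) v) (a + b - (p : ℤ) * i) w)

/-- Weak commutativity for twisted vertex operators with exponent `k`: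
`(x₁-x₂)^k Y_M(u,x₁)Y_M(v,x₂) = (x₁-x₂)^k Y_M(v,x₂)Y_M(u,x₁)`, as the equality of the
coefficients of `x₁^{a/p} x₂^{b/p}` (endomorphism-valued). -/
def TwWC (p : ℕ) (YM : V →ₗ[ℂ] ℤ → Module.End ℂ M) (k : ℕ) (u v : V) : Prop :=
  ∀ a b : ℤ,
    (∑ᶠ i : ℕ, ((-1 : ℂ) ^ i * cbinom (k : ℂ) i) •
        (YM u ((p : ℤ) * ((k : ℤ) - i) - a - p) * YM v ((p : ℤ) * i - b - p)))
      = ∑ᶠ i : ℕ, ((-1 : ℂ) ^ i * cbinom (k : ℂ) i) •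
          (YM v ((p : ℤ) * i - b - p) * YM u ((p : ℤ) * ((k : ℤ) - i) - a - p))

/-- Modified weak associativity for twisted vertex operators with exponent `k`:
`lim_{x₁^{1/p} → ωₚ^s (x₂+x₀)^{1/p}} ((x₁-x₂)^k Y_M(u,x₁)Y_M(v,x₂))
   = x₀^k Y_M(Y(ν^{-s}u,x₀)v,x₂)` for all `s ∈ ℤ`, stated as the equality of the
coefficients of `x₀^n x₂^{C/p}` applied to an arbitrary vector `w`.  In the formal limit,
each integral power of `x₁^{1/p}` is replaced by the corresponding binomially expanded
power of `ωₚ^s (x₂+x₀)^{1/p}`. -/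
def TwMWA (p : ℕ) (𝒜 : VOA V) (ν : V ≃ₗ[ℂ] V) (ωp : ℂ)
    (YM : V →ₗ[ℂ] ℤ → Module.End ℂ M) (k : ℕ) (u v : V) : Prop :=
  ∀ (s n C : ℤ) (w : M),
    (∑ᶠ a : ℤ, (ωp ^ (s * a) * cbinomZ ((a : ℂ) / (p : ℂ)) n) •
        (∑ᶠ i : ℕ, ((-1 : ℂ) ^ i * cbinom (k : ℂ) i) •
          YM u ((p : ℤ) * ((k : ℤ) - i) - a - p)
            (YM v ((p : ℤ) * i - (C - a + (p : ℤ) * n) - p) w)))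
      = YM (𝒜.Y ((ν ^ (-s)) u) ((k : ℤ) - n - 1) v) (-C - p) w

end Twisted


section Helpers

lemma descP_smeval (z : ℂ) (k : ℕ) :
    (descPochhammer ℤ k).smeval z = ∏ j ∈ Finset.range k, (z - (j:ℂ)) := by
  induction k with
  | zero => simp [descPochhammer_zero, Polynomial.smeval_one]
  | succ n ih => rw [descPochhammer_succ_right, Polynomial.smeval_mul, ih, Finset.prod_range_succ]
                 simp [Polynomial.smeval_sub, Polynomial.smeval_X, Polynomial.smeval_natCast]

lemma cbinom_eq_choose (z : ℂ) (k : ℕ) : cbinom z k = Ring.choose z k := by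
  have h := Ring.descPochhammer_eq_factorial_smul_choose z k
  rw [descP_smeval] at h
  have hf : (k.factorial : ℂ) ≠ 0 := by exact_mod_cast Nat.factorial_ne_zero k
  rw [cbinom, h, nsmul_eq_mul]
  field_simp

lemma cbinom_natCast (n k : ℕ) : cbinom (n : ℂ) k = (n.choose k : ℂ) := by
  rw [cbinom_eq_choose, Ring.choose_natCast]

lemma cbinom_nat_zero {n k : ℕ} (h : n < k) : cbinom (n : ℂ) k = 0 := by
  rw [cbinom_natCast, Nat.choose_eq_zero_of_lt h]; simp

lemma cbinom_vandermonde (x y : ℂ) (k : ℕ) :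
    ∑ q ∈ Finset.HasAntidiagonal.antidiagonal k, cbinom x q.1 * cbinom y q.2 = cbinom (x + y) k := by
  simp only [cbinom_eq_choose]
  exact (Ring.add_choose_eq k (Commute.all x y)).symm

lemma cbinom_neg (z : ℂ) (k : ℕ) :
    (-1 : ℂ) ^ k * cbinom z k = cbinom ((k : ℂ) - 1 - z) k := by
  unfold cbinom
  rw [← mul_div_assoc]
  congr 1
  rw [← Finset.prod_range_reflect (fun j => ((k:ℂ) - 1 - z - (j:ℂ))) k]
  have h : ∀ j ∈ Finset.range k, (k:ℂ) - 1 - z - ((k - 1 - j : ℕ) : ℂ) = (-1) * (z - j) := by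
    intro j hj
    have hj' : j < k := Finset.mem_range.mp hj
    have hc : ((k - 1 - j : ℕ) : ℂ) = (k:ℂ) - 1 - j := by
      have h2 : k - 1 - j = k - (1 + j) := by omega
      rw [h2]
      push_cast [Nat.cast_sub (by omega : 1 + j ≤ k)]
      ring
    rw [hc]; ring
  rw [Finset.prod_congr rfl h, Finset.prod_mul_distrib, Finset.prod_const, Finset.card_range]

lemma finsum_range {M : Type*} [AddCommMonoid M] (f : ℕ → M) (B : ℕ)
    (h : ∀ i, B ≤ i → f i = 0) : ∑ᶠ i, f i = ∑ i ∈ Finset.range B, f i := by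
  apply finsum_eq_finset_sum_of_support_subset
  intro i hi
  simp only [Function.mem_support] at hi
  simp only [Finset.coe_range, Set.mem_Iio]
  by_contra hc
  exact hi (h i (le_of_not_gt hc))

end Helpers

section S19

variable {V M : Type} [AddCommGroup V] [Module ℂ V] [AddCommGroup M] [Module ℂ M]

/-- Twisted weak associativity with exponent `l = L/p ∈ (1/p)ℤ`, for a fixed triple
`u, v, w`:
`P_{[[x₀,x₀⁻¹]]} ((x₀+x₂)^l Y_M(u,x₀+x₂)Y_M(v,x₂)w)
   = (x₂+x₀)^l (1/p) ∑_{r=0}^{p-1} ωₚ^{-lrp} Y_M(Y(ν^r u,x₀)v,x₂)w`,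
stated as the equality of the coefficients of `x₀^m x₂^{c/p}` for all integers `m`. -/
def TwWA (p : ℕ) (𝒜 : VOA V) (ν : V ≃ₗ[ℂ] V) (ωp : ℂ)
    (YM : V →ₗ[ℂ] ℤ → Module.End ℂ M) (L : ℤ) (u v : V) (w : M) : Prop :=
  ∀ m c : ℤ,
    (∑ᶠ q : ℕ × ℕ,
        (cbinom ((L : ℂ) / (p : ℂ)) q.1 *
          cbinom ((m : ℂ) + (q.1 : ℂ) + (q.2 : ℂ) - (L : ℂ) / (p : ℂ)) q.2) •
        YM u (L - (p : ℤ) * (m + 1 + q.1 + q.2))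
          (YM v ((p : ℤ) * ((q.1 : ℤ) + q.2) - p - c) w))
      = (p : ℂ)⁻¹ • ∑ r ∈ Finset.range p, ωp ^ (-(L * r)) •
          (∑ᶠ i : ℕ, cbinom ((L : ℂ) / (p : ℂ)) i •
            YM (𝒜.Y ((ν ^ r) u) ((i : ℤ) - m - 1) v) (L - (p : ℤ) * i - p - c) w)

/-- equations (4.21), (4.22).  Truncation and the twisted Jacobi
identity imply that there are `k(u,v) ∈ ℕ` and `l(u,w) ∈ (1/p)ℕ` such that weak
commutativity holds for every integral exponent `k ≥ k(u,v)` and twisted weak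
associativity holds for every `l ∈ (1/p)ℤ` with `l ≥ l(u,w)`. -/
theorem statement19 (p : ℕ) (hp : 0 < p) (𝒜 : VOA V) (ν : V ≃ₗ[ℂ] V)
    (hν_vac : ν 𝒜.vac = 𝒜.vac) (hν_conf : ν 𝒜.conf = 𝒜.conf)
    (hν_Y : ∀ (u : V) (n : ℤ) (v : V), ν (𝒜.Y u n v) = 𝒜.Y (ν u) n (ν v))
    (hν_per : ν ^ p = 1) (ωp : ℂ) (hωp : IsPrimitiveRoot ωp p)
    (YM : V →ₗ[ℂ] ℤ → Module.End ℂ M)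
    (hT : TwTrunc YM) (hJ : TwJacobi p 𝒜 ν ωp YM) :
    ∃ (k : V → V → ℕ) (l : V → M → ℕ),
      ∀ (u v : V) (w : M),
        (∀ k' : ℕ, k u v ≤ k' → TwWC p YM k' u v) ∧
        (∀ L : ℤ, (l u w : ℤ) ≤ L → TwWA p 𝒜 ν ωp YM L u v w) := by

  classical
  refine ⟨fun u v => (Finset.range p).sup (fun r => (𝒜.trunc ((ν ^ r) u) v).choose.toNat),
          fun u w => (hT u w).choose.toNat, fun u v w => ⟨?_, ?_⟩⟩
  · -- weak commutativity
    intro k' hk' a b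
    apply LinearMap.ext; intro w
    -- all algebra modes vanish
    have hz : ∀ (r i : ℕ), 𝒜.Y ((ν ^ r) u) ((k' : ℤ) + i) v = 0 := by
      intro r i
      have hcycle : (ν ^ r) u = (ν ^ (r % p)) u := by
        conv_lhs => rw [← Nat.mod_add_div r p, pow_add, pow_mul, hν_per, one_pow, mul_one]
      rw [hcycle]
      apply (𝒜.trunc ((ν ^ (r % p)) u) v).choose_spec
      have h1 := Int.self_le_toNat (𝒜.trunc ((ν ^ (r % p)) u) v).choose
      have h2 : (𝒜.trunc ((ν ^ (r % p)) u) v).choose.toNat ≤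
          (Finset.range p).sup (fun r => (𝒜.trunc ((ν ^ r) u) v).choose.toNat) :=
        Finset.le_sup (f := fun r => (𝒜.trunc ((ν ^ r) u) v).choose.toNat) (Finset.mem_range.mpr (Nat.mod_lt r hp))
      have hk2 : (Finset.range p).sup (fun r => (𝒜.trunc ((ν ^ r) u) v).choose.toNat) ≤ k' := hk'
      omega
    have jac := hJ u v w (k' : ℤ) (-a - p) (-b - p)
    simp only [hz, map_zero, Pi.zero_apply, LinearMap.zero_apply, smul_zero, finsum_zero,
      Finset.sum_const_zero] at jac
    rw [sub_eq_zero] at jac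
    push_cast at jac
    simp only [zpow_natCast] at jac
    have hsupp : ∀ {N : Type} [AddCommMonoid N] [Module ℂ N] (g : ℕ → N),
        (∑ᶠ i : ℕ, ((-1:ℂ)^i * cbinom (k' : ℂ) i) • g i)
          = ∑ i ∈ Finset.range (k'+1), ((-1:ℂ)^i * cbinom (k' : ℂ) i) • g i := by
      intro N _ _ g
      apply finsum_range
      intro i hi
      rw [cbinom_nat_zero (by omega), mul_zero, zero_smul]
    simp only [hsupp] at jac ⊢
    simp only [LinearMap.sum_apply, LinearMap.smul_apply, Module.End.mul_apply]
    calc ∑ i ∈ Finset.range (k'+1), ((-1:ℂ)^i * cbinom (k' : ℂ) i) •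
            (YM u ((p:ℤ) * ((k':ℤ) - i) - a - p)) ((YM v ((p:ℤ) * i - b - p)) w)
        = ∑ i ∈ Finset.range (k'+1), ((-1:ℂ)^i * cbinom (k' : ℂ) i) •
            (YM u (-a - p + (p:ℤ) * ((k':ℤ) - i))) ((YM v (-b - p + (p:ℤ) * i)) w) := by
          refine Finset.sum_congr rfl fun i _ => ?_
          rw [show (p:ℤ) * ((k':ℤ) - i) - a - p = -a - p + p * ((k':ℤ) - i) from by ring,
              show (p:ℤ) * i - b - p = -b - p + (p:ℤ) * i from by ring]
      _ = (-1:ℂ)^k' • ∑ i ∈ Finset.range (k'+1), ((-1:ℂ)^i * cbinom (k' : ℂ) i) •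
            (YM v (-b - p + (p:ℤ) * ((k':ℤ) - i))) ((YM u (-a - p + (p:ℤ) * i)) w) := jac
      _ = ∑ i ∈ Finset.range (k'+1), ((-1:ℂ)^i * cbinom (k' : ℂ) i) •
            (YM v ((p:ℤ) * i - b - p)) ((YM u ((p:ℤ) * ((k':ℤ) - i) - a - p)) w) := by
          rw [← Finset.sum_range_reflect (fun i => ((-1:ℂ)^i * cbinom (k':ℂ) i) •
            (YM v ((p:ℤ)*i - b - p)) ((YM u ((p:ℤ)*((k':ℤ)-i)-a-p)) w)) (k'+1)]
          rw [Finset.smul_sum]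
          refine Finset.sum_congr rfl fun j hj => ?_
          have hj' : j ≤ k' := Nat.lt_succ_iff.mp (Finset.mem_range.mp hj)
          simp only [Nat.add_sub_cancel]
          rw [show ((k' - j : ℕ) : ℤ) = (k':ℤ) - j from by omega]
          rw [show (p:ℤ) * ((k':ℤ) - ((k':ℤ) - j)) - a - p = -a - p + (p:ℤ) * j from by ring,
              show (p:ℤ) * ((k':ℤ) - j) - b - p = -b - p + (p:ℤ) * ((k':ℤ) - j) from by ring]
          rw [smul_smul]
          congr 1
          rw [cbinom_natCast, cbinom_natCast, Nat.choose_symm hj']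
          have he : (-1:ℂ)^(k'-j) = (-1:ℂ)^k' * (-1:ℂ)^j := by
            rw [← pow_add, show k' + j = (k' - j) + 2*j from by omega, pow_add, pow_mul,
              neg_one_sq, one_pow, mul_one]
          rw [he]; ring
  · -- weak associativity
    intro L hL m c
    have hL2 : ((hT u w).choose.toNat : ℤ) ≤ L := hL
    obtain ⟨N2, hN2⟩ := hT v w
    set B : ℕ := (N2 + p + c).toNat with hBdef
    have h1p : (1:ℤ) ≤ (p:ℤ) := by exact_mod_cast hp
    have hB : ∀ j : ℕ, B ≤ j → YM v ((p:ℤ) * j - p - c) w = 0 := by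
      intro j hj
      apply hN2
      have h2 : (N2 + p + c) ≤ (j:ℤ) := le_trans (Int.self_le_toNat _) (by exact_mod_cast hj)
      have h3 : (0:ℤ) ≤ (j:ℤ) := Int.natCast_nonneg j
      nlinarith
    have hu : ∀ i : ℕ, YM u (L + (p:ℤ)*i) w = 0 := by
      intro i
      apply (hT u w).choose_spec
      have h4 := Int.self_le_toNat (hT u w).choose
      have h5 : (0:ℤ) ≤ (p:ℤ)*i := by positivity
      omega
    have jac := hJ u v w (-m-1) L (-(p:ℤ)-c)
    simp only [hu, map_zero, smul_zero, finsum_zero, sub_zero] at jac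
    push_cast at jac
    have hco : ∀ i : ℕ, ((-1:ℂ))^i * cbinom (-(m:ℂ) - 1) i = cbinom ((m:ℂ) + i) i := by
      intro i
      rw [cbinom_neg, show ((i:ℂ)) - 1 - (-(m:ℂ) - 1) = (m:ℂ) + i from by ring]
    have e1 : (∑ᶠ (i : ℕ), ((-1:ℂ) ^ i * cbinom (-(m:ℂ) - 1) i) •
            (YM u (L + (p:ℤ) * (-m - 1 - (i:ℤ)))) ((YM v (-(p:ℤ) - c + (p:ℤ) * (i:ℤ))) w))
        = ∑ i ∈ Finset.range B, ((-1:ℂ) ^ i * cbinom (-(m:ℂ) - 1) i) •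
            (YM u (L + (p:ℤ) * (-m - 1 - (i:ℤ)))) ((YM v (-(p:ℤ) - c + (p:ℤ) * (i:ℤ))) w) := by
      apply finsum_range
      intro i hi
      rw [show -(p:ℤ) - c + (p:ℤ)*(i:ℤ) = (p:ℤ)*(i:ℤ) - p - c from by ring, hB i hi, map_zero,
        smul_zero]
    have hdisj : (↑(Finset.range B) : Set ℕ).PairwiseDisjoint
        (Finset.HasAntidiagonal.antidiagonal : ℕ → Finset (ℕ × ℕ)) := by
      intro x _ y _ hxy
      simp only [Function.onFun, Finset.disjoint_left]
      intro q hqx hqy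
      rw [Finset.HasAntidiagonal.mem_antidiagonal] at hqx hqy
      exact hxy (by omega)
    have hsub : (Function.support fun q : ℕ × ℕ =>
          (cbinom ((L:ℂ)/(p:ℂ)) q.1 * cbinom ((m:ℂ) + q.1 + q.2 - (L:ℂ)/(p:ℂ)) q.2) •
          (YM u (L - (p:ℤ) * (m + 1 + q.1 + q.2))) ((YM v ((p:ℤ) * ((q.1:ℤ) + q.2) - p - c)) w))
        ⊆ ((Finset.range B).biUnion Finset.HasAntidiagonal.antidiagonal : Finset (ℕ × ℕ)) := by
      intro q hq
      simp only [Function.mem_support] at hq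
      by_contra hc2
      apply hq
      have hge : B ≤ q.1 + q.2 := by
        by_contra hlt
        exact hc2 (Finset.mem_coe.mpr (Finset.mem_biUnion.mpr ⟨q.1 + q.2,
          Finset.mem_range.mpr (lt_of_not_ge hlt), Finset.HasAntidiagonal.mem_antidiagonal.mpr rfl⟩))
      rw [show (p:ℤ) * ((q.1:ℤ) + (q.2:ℤ)) - p - c = (p:ℤ) * ((q.1 + q.2 : ℕ):ℤ) - p - c from by
            push_cast; ring,
        hB _ hge, map_zero, smul_zero]
    rw [finsum_eq_finset_sum_of_support_subset _ hsub, Finset.sum_biUnion hdisj]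
    have hstep : ∀ i ∈ Finset.range B,
        (∑ q ∈ Finset.HasAntidiagonal.antidiagonal i,
          (cbinom ((L:ℂ)/(p:ℂ)) q.1 * cbinom ((m:ℂ) + q.1 + q.2 - (L:ℂ)/(p:ℂ)) q.2) •
          (YM u (L - (p:ℤ) * (m + 1 + q.1 + q.2))) ((YM v ((p:ℤ) * ((q.1:ℤ) + q.2) - p - c)) w))
        = ((-1:ℂ)^i * cbinom (-(m:ℂ)-1) i) •
            (YM u (L + (p:ℤ) * (-m - 1 - (i:ℤ)))) ((YM v (-(p:ℤ) - c + (p:ℤ) * (i:ℤ))) w) := by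
      intro i _
      have hv := cbinom_vandermonde ((L:ℂ)/(p:ℂ)) ((m:ℂ) + i - (L:ℂ)/(p:ℂ)) i
      rw [show (L:ℂ)/(p:ℂ) + ((m:ℂ) + i - (L:ℂ)/(p:ℂ)) = (m:ℂ) + i from by ring] at hv
      calc (∑ q ∈ Finset.HasAntidiagonal.antidiagonal i,
          (cbinom ((L:ℂ)/(p:ℂ)) q.1 * cbinom ((m:ℂ) + q.1 + q.2 - (L:ℂ)/(p:ℂ)) q.2) •
          (YM u (L - (p:ℤ) * (m + 1 + q.1 + q.2))) ((YM v ((p:ℤ) * ((q.1:ℤ) + q.2) - p - c)) w))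
          = ∑ q ∈ Finset.HasAntidiagonal.antidiagonal i,
            (cbinom ((L:ℂ)/(p:ℂ)) q.1 * cbinom ((m:ℂ) + i - (L:ℂ)/(p:ℂ)) q.2) •
            (YM u (L + (p:ℤ) * (-m - 1 - (i:ℤ)))) ((YM v (-(p:ℤ) - c + (p:ℤ) * (i:ℤ))) w) := by
            refine Finset.sum_congr rfl fun q hq => ?_
            have hq' : q.1 + q.2 = i := Finset.HasAntidiagonal.mem_antidiagonal.mp hq
            rw [show (m:ℂ) + q.1 + q.2 - (L:ℂ)/(p:ℂ) = (m:ℂ) + i - (L:ℂ)/(p:ℂ) from by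
                  rw [← hq']; push_cast; ring,
                show L - (p:ℤ) * (m + 1 + q.1 + q.2) = L + (p:ℤ) * (-m - 1 - (i:ℤ)) from by
                  rw [← hq']; push_cast; ring,
                show (p:ℤ) * ((q.1:ℤ) + q.2) - p - c = -(p:ℤ) - c + (p:ℤ) * (i:ℤ) from by
                  rw [← hq']; push_cast; ring]
        _ = ((-1:ℂ)^i * cbinom (-(m:ℂ)-1) i) •
            (YM u (L + (p:ℤ) * (-m - 1 - (i:ℤ)))) ((YM v (-(p:ℤ) - c + (p:ℤ) * (i:ℤ))) w) := by
            rw [← Finset.sum_smul, hv, hco i]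
    rw [Finset.sum_congr rfl hstep, ← e1, jac]
    congr 1
    refine Finset.sum_congr rfl fun r _ => ?_
    rw [show -(L * (r:ℤ)) = -(r:ℤ) * L from by ring]
    congr 1
    refine finsum_congr fun i => ?_
    rw [show ((i:ℤ)) - m - 1 = -m - 1 + (i:ℤ) from by ring,
        show L - (p:ℤ)*(i:ℤ) - p - c = L + (-(p:ℤ) - c) - (p:ℤ)*(i:ℤ) from by ring]


end S19
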